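/- Let q, c₀ be real numbers and ε : [0,1] → ℝ a continuous function. Define ε̄(x) = ε(x) + (c₀+q)∫₀ˣ e^{q(x−h)} ε(h) dh for x ∈ [0,1]. Then for every x ∈ [0,1], ε(x) = ε̄(x) − (c₀+q)∫₀ˣ e^{−c₀(x−h)} ε̄(h) dh. -/
import Mathlib


/- STATEMENT 2: the Volterra backstepping transformation
ε̄(x) = ε(x) + (c₀+q)∫₀ˣ e^{q(x−h)} ε(h) dh on [0,1] is inverted by
ε(x) = ε̄(x) − (c₀+q)∫₀ˣ e^{−c₀(x−h)} ε̄(h) dh. -/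

open Set

theorem volterra_backstepping_inverse (q c₀ : ℝ) (ε : ℝ → ℝ)
    (hε : ContinuousOn ε (Icc 0 1))
    (εbar : ℝ → ℝ)
    (hεbar : ∀ x ∈ Icc (0:ℝ) 1,
      εbar x = ε x + (c₀ + q) * ∫ h in (0:ℝ)..x, Real.exp (q * (x - h)) * ε h) :
    ∀ x ∈ Icc (0:ℝ) 1,
      ε x = εbar x - (c₀ + q) * ∫ h in (0:ℝ)..x, Real.exp (-c₀ * (x - h)) * εbar h := by
  -- continuous extension of ε to all of ℝ
  set ε' : ℝ → ℝ := fun y => ε (max 0 (min 1 y)) with hε'def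
  have hcontε' : Continuous ε' := by
    apply hε.comp_continuous
    · exact continuous_const.max (continuous_const.min continuous_id)
    · intro y
      exact ⟨le_max_left _ _, max_le (by norm_num) (min_le_left _ _)⟩
  have hε'eq : ∀ y ∈ Icc (0:ℝ) 1, ε' y = ε y := by
    intro y hy
    simp only [hε'def, min_eq_right hy.2, max_eq_right hy.1]
  -- primitive of e^{-qh} ε'(h)
  set L : ℝ → ℝ := fun y => ∫ h in (0:ℝ)..y, Real.exp (-(q * h)) * ε' h with hLdef
  have hLder : ∀ y : ℝ, HasDerivAt L (Real.exp (-(q * y)) * ε' y) y := by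
    intro y
    have hc : Continuous fun h : ℝ => Real.exp (-(q * h)) * ε' h :=
      (Real.continuous_exp.comp (continuous_const.mul continuous_id).neg).mul hcontε'
    exact intervalIntegral.integral_hasDerivAt_right (hc.intervalIntegrable _ _)
      hc.stronglyMeasurable.stronglyMeasurableAtFilter hc.continuousAt
  have hcontL : Continuous L :=
    continuous_iff_continuousAt.2 fun y => (hLder y).differentiableAt.continuousAt
  -- globally defined version of εbar
  set B : ℝ → ℝ := fun y => ε' y + (c₀ + q) * (Real.exp (q * y) * L y) with hBdef
  have hcontB : Continuous B := by
    apply hcontε'.add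
    exact continuous_const.mul
      ((Real.continuous_exp.comp (continuous_const.mul continuous_id)).mul hcontL)
  -- the original integral equals e^{qy} L y
  have hInt1 : ∀ y ∈ Icc (0:ℝ) 1,
      (∫ h in (0:ℝ)..y, Real.exp (q * (y - h)) * ε h) = Real.exp (q * y) * L y := by
    intro y hy
    have : (∫ h in (0:ℝ)..y, Real.exp (q * (y - h)) * ε h)
        = ∫ h in (0:ℝ)..y, Real.exp (q * y) * (Real.exp (-(q * h)) * ε' h) := by
      apply intervalIntegral.integral_congr
      intro h hh
      rw [uIcc_of_le hy.1] at hh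
      have hmem : h ∈ Icc (0:ℝ) 1 := ⟨hh.1, hh.2.trans hy.2⟩
      show Real.exp (q * (y - h)) * ε h = Real.exp (q * y) * (Real.exp (-(q * h)) * ε' h)
      rw [hε'eq h hmem, show q * (y - h) = q * y + -(q * h) by ring, Real.exp_add]
      ring
    rw [this, intervalIntegral.integral_const_mul]
  have hBeq : ∀ y ∈ Icc (0:ℝ) 1, εbar y = B y := by
    intro y hy
    rw [hεbar y hy, hInt1 y hy]
    simp only [hBdef, hε'eq y hy]
  -- primitive of e^{c₀h} B(h)
  set G : ℝ → ℝ := fun y => ∫ h in (0:ℝ)..y, Real.exp (c₀ * h) * B h with hGdef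
  have hGder : ∀ y : ℝ, HasDerivAt G (Real.exp (c₀ * y) * B y) y := by
    intro y
    have hc : Continuous fun h : ℝ => Real.exp (c₀ * h) * B h :=
      (Real.continuous_exp.comp (continuous_const.mul continuous_id)).mul hcontB
    exact intervalIntegral.integral_hasDerivAt_right (hc.intervalIntegrable _ _)
      hc.stronglyMeasurable.stronglyMeasurableAtFilter hc.continuousAt
  -- key identity: G y = e^{(c₀+q)y} L y
  have hKey : ∀ y : ℝ, G y = Real.exp ((c₀ + q) * y) * L y := by
    have hRder : ∀ y : ℝ, HasDerivAt (fun z => Real.exp ((c₀ + q) * z) * L z)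
        (Real.exp ((c₀ + q) * y) * ((c₀ + q) * 1) * L y
          + Real.exp ((c₀ + q) * y) * (Real.exp (-(q * y)) * ε' y)) y := by
      intro y
      have he : HasDerivAt (fun z => Real.exp ((c₀ + q) * z))
          (Real.exp ((c₀ + q) * y) * ((c₀ + q) * 1)) y :=
        ((hasDerivAt_id y).const_mul (c₀ + q)).exp
      exact he.mul (hLder y)
    have hDder : ∀ y : ℝ,
        HasDerivAt (fun z => G z - Real.exp ((c₀ + q) * z) * L z) 0 y := by
      intro y
      have h := (hGder y).sub (hRder y)
      have hval : Real.exp (c₀ * y) * B y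
          - (Real.exp ((c₀ + q) * y) * ((c₀ + q) * 1) * L y
            + Real.exp ((c₀ + q) * y) * (Real.exp (-(q * y)) * ε' y)) = 0 := by
        have h1 : Real.exp ((c₀ + q) * y) = Real.exp (c₀ * y) * Real.exp (q * y) := by
          rw [← Real.exp_add]; ring_nf
        have h2 : Real.exp (q * y) * Real.exp (-(q * y)) = 1 := by
          rw [← Real.exp_add]; simp
        simp only [hBdef, h1]
        linear_combination (-(Real.exp (c₀ * y) * ε' y)) * h2
      rwa [hval] at h
    have hconst : ∀ y : ℝ, G y - Real.exp ((c₀ + q) * y) * L y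
        = G 0 - Real.exp ((c₀ + q) * 0) * L 0 := by
      intro y
      exact is_const_of_deriv_eq_zero
        (fun z => (hDder z).differentiableAt) (fun z => (hDder z).deriv) y 0
    intro y
    have h0 : G 0 = 0 := intervalIntegral.integral_same
    have hL0 : L 0 = 0 := intervalIntegral.integral_same
    have := hconst y
    rw [h0, hL0, mul_zero, sub_zero, sub_eq_zero] at this
    exact this
  -- now conclude
  intro x hx
  have hInt2 : (∫ h in (0:ℝ)..x, Real.exp (-c₀ * (x - h)) * εbar h)
      = Real.exp (-(c₀ * x)) * G x := by
    have : (∫ h in (0:ℝ)..x, Real.exp (-c₀ * (x - h)) * εbar h)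
        = ∫ h in (0:ℝ)..x, Real.exp (-(c₀ * x)) * (Real.exp (c₀ * h) * B h) := by
      apply intervalIntegral.integral_congr
      intro h hh
      rw [uIcc_of_le hx.1] at hh
      have hmem : h ∈ Icc (0:ℝ) 1 := ⟨hh.1, hh.2.trans hx.2⟩
      show Real.exp (-c₀ * (x - h)) * εbar h = Real.exp (-(c₀ * x)) * (Real.exp (c₀ * h) * B h)
      rw [hBeq h hmem, show -c₀ * (x - h) = -(c₀ * x) + c₀ * h by ring, Real.exp_add]
      ring
    rw [this, intervalIntegral.integral_const_mul]
  rw [hInt2, hKey x, hBeq x hx, ← hε'eq x hx]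
  have h1 : Real.exp (-(c₀ * x)) * Real.exp ((c₀ + q) * x) = Real.exp (q * x) := by
    rw [← Real.exp_add]; ring_nf
  simp only [hBdef]
  linear_combination ((c₀ + q) * L x) * h1
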